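/- For any sequence (n_i)_{i∈ℤ} ⊂ ℤ ∪ {-∞} for which there is an integer k with n_i = -∞ for all i > k, the map ‖Σ_{i≫-∞} x_i t^i‖ = max_{i≤k} |x_i| q^{n_i} is a seminorm on the K-vector space K((t)), equal to the gauge seminorm of the lattice Σ_{i∈ℤ} 𝔭^{n_i} t^i; moreover the higher topology on K((t)) is exactly the locally convex topology defined by the family of all such seminorms. -/

import Mathlib

/-!
Common setting: `K` is a characteristic-zero local field (a finite extension of `ℚ_p`)
with ring of integers `𝒪 = {c : K | ‖c‖ ≤ 1}`, maximal ideal `𝔭 = {c : K | ‖c‖ < 1}`,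
residue field of cardinality `q` and the absolute value normalised by `‖π‖ = q⁻¹`.
We formalise the two-dimensional local fields `K((t))` (as `LaurentSeries K`) and
`K{{t}}` (as the submodule `mixedCarrier K` of `ℤ → K`), their higher topologies, and
the relevant functional-analytic notions (lattices, seminorms, boundedness,
c-compactness, compactoidness, completeness for nets, duality).
-/

open Filter Topology Set Pointwise
open scoped Classical

noncomputable section

namespace TwoDimLF

variable (K : Type) [NontriviallyNormedField K]

/-- `K` is a characteristic-zero nonarchimedean local field: the norm is nonarchimedean,
takes the values `q^ℤ` on `K˟` (with a uniformizer of norm `q⁻¹`), `K` is complete, locally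
compact, of characteristic zero, and the residue field has exactly `q` elements. -/
structure IsCharZeroLocalField (q : ℕ) : Prop where
  nonarch : ∀ x y : K, ‖x + y‖ ≤ max ‖x‖ ‖y‖
  one_lt_q : 1 < q
  norm_values : ∀ x : K, x ≠ 0 → ∃ n : ℤ, ‖x‖ = (q : ℝ) ^ (-n)
  exists_uniformizer : ∃ π : K, ‖π‖ = ((q : ℝ))⁻¹
  charZero : CharZero K
  locallyCompact : LocallyCompactSpace K
  complete : CompleteSpace K
  residue_card : ∃ s : Finset K, s.card = q ∧
    ∀ x : K, ‖x‖ ≤ 1 → ∃! y, y ∈ s ∧ ‖x - y‖ < 1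

/-- The fractional ideal `𝔭^n ⊆ K` for `n ∈ ℤ ∪ {-∞}`, with the convention `𝔭^(-∞) = K`. -/
def pB (q : ℕ) (n : WithBot ℤ) : Set K :=
  WithBot.recBotCoe Set.univ (fun m : ℤ => {x : K | ‖x‖ ≤ (q : ℝ) ^ (-m)}) n

/-- The fractional ideal `𝔭^n ⊆ K` for `n ∈ ℤ ∪ {∞}`, with the convention `𝔭^∞ = {0}`. -/
def pT (q : ℕ) (n : WithTop ℤ) : Set K :=
  WithTop.recTopCoe {0} (fun m : ℤ => {x : K | ‖x‖ ≤ (q : ℝ) ^ (-m)}) n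

/-- The fractional ideal `𝔭^n ⊆ K` for `n ∈ ℤ ∪ {±∞}`. -/
def pE (q : ℕ) (n : WithBot (WithTop ℤ)) : Set K :=
  WithBot.recBotCoe Set.univ (fun m : WithTop ℤ => pT K q m) n

/-- `q ^ n ∈ ℝ` for `n ∈ ℤ ∪ {-∞}`, with the convention `q^(-∞) = 0`. -/
def qpow (q : ℕ) (n : WithBot ℤ) : ℝ :=
  WithBot.recBotCoe 0 (fun m : ℤ => (q : ℝ) ^ m) n

/-- `1 - k` for `k ∈ ℤ ∪ {±∞}` (so `1 - (±∞) = ∓∞`). -/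
def oneSubE : WithBot (WithTop ℤ) → WithBot (WithTop ℤ) :=
  WithBot.recBotCoe ((⊤ : WithTop ℤ) : WithBot (WithTop ℤ))
    (WithTop.recTopCoe (⊥ : WithBot (WithTop ℤ))
      (fun z : ℤ => (((1 - z : ℤ) : WithTop ℤ) : WithBot (WithTop ℤ))))

section LCS

variable {V : Type} [AddCommGroup V] [Module K V]

/-- `S` is an `𝒪`-submodule of the `K`-vector space `V`, where `𝒪 = {c : K | ‖c‖ ≤ 1}`
is the ring of integers of `K`. -/
def IsOSubmodule (S : Set V) : Prop :=
  (0 : V) ∈ S ∧ (∀ x ∈ S, ∀ y ∈ S, x + y ∈ S) ∧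
    ∀ c : K, ‖c‖ ≤ 1 → ∀ x ∈ S, c • x ∈ S

/-- `S` is an `𝒪`-lattice in `V`: an `𝒪`-submodule such that every vector is carried
into `S` by some nonzero scalar. -/
def IsLatticeSet (S : Set V) : Prop :=
  IsOSubmodule K S ∧ ∀ v : V, ∃ a : K, a ≠ 0 ∧ a • v ∈ S

/-- A (nonarchimedean) seminorm on the `K`-vector space `V`. -/
def IsSeminorm (N : V → ℝ) : Prop :=
  (∀ (c : K) (v : V), N (c • v) = ‖c‖ * N v) ∧ ∀ v w : V, N (v + w) ≤ max (N v) (N w)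

/-- The gauge seminorm of a lattice `Λ ⊆ V`: `‖v‖_Λ = inf {‖a‖ : v ∈ aΛ}`. -/
def gaugeSeminorm (Λ : Set V) (v : V) : ℝ :=
  sInf {r : ℝ | ∃ a : K, v ∈ a • Λ ∧ r = ‖a‖}

/-- The group topology on `W` determined by a family `B` of neighbourhoods of zero:
neighbourhoods of `x` are generated by the translates `x + U`, `U ∈ B`. -/
def addTopologyOf {W : Type} [AddCommGroup W] (B : Set (Set W)) : TopologicalSpace W :=
  TopologicalSpace.mkOfNhds fun x => Filter.map (fun v => x + v) (⨅ U ∈ B, Filter.principal U)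

/-- `B` is (Von-Neumann) bounded for the locally convex topology `τ`: every open lattice
absorbs it. -/
def IsVNBounded (τ : TopologicalSpace V) (B : Set V) : Prop :=
  ∀ Λ : Set V, IsLatticeSet K Λ → IsOpen[τ] Λ → ∃ a : K, B ⊆ a • Λ

/-- The `𝒪`-submodule `A ⊆ V` is c-compact: for every decreasing filtered family of open
lattices `L i`, the canonical map `A → lim A/(L i ∩ A)` is surjective (phrased via
compatible families of representatives). -/
def IsCCompact (τ : TopologicalSpace V) (A : Set V) : Prop :=
  ∀ (ι : Type) (L : ι → Set V),
    (∀ i, IsLatticeSet K (L i) ∧ IsOpen[τ] (L i)) →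
    (∀ i j, ∃ k, L k ⊆ L i ∧ L k ⊆ L j) →
    ∀ x : ι → V, (∀ i, x i ∈ A) →
      (∀ i j, L j ⊆ L i → x j - x i ∈ L i) →
      ∃ a ∈ A, ∀ i, a - x i ∈ L i

/-- The `𝒪`-submodule `A ⊆ V` is compactoid: for every open lattice `Λ` there are finitely
many vectors `v₁, …, v_m ∈ V` with `A ⊆ Λ + 𝒪v₁ + ⋯ + 𝒪v_m`. -/
def IsCompactoid (τ : TopologicalSpace V) (A : Set V) : Prop :=
  ∀ Λ : Set V, IsLatticeSet K Λ → IsOpen[τ] Λ →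
    ∃ (m : ℕ) (v : Fin m → V),
      A ⊆ {u : V | ∃ l ∈ Λ, ∃ c : Fin m → K, (∀ j, ‖c j‖ ≤ 1) ∧ u = l + ∑ j, c j • v j}

/-- `A ⊆ V` is complete: every Cauchy net with values in `A` converges to a point of `A`
(for the topology `τ`). -/
def IsNetComplete (τ : TopologicalSpace V) (A : Set V) : Prop :=
  ∀ (ι : Type) [Preorder ι] [Nonempty ι],
    (∀ i j : ι, ∃ k, i ≤ k ∧ j ≤ k) →
    ∀ x : ι → V, (∀ i, x i ∈ A) →
      (∀ U ∈ @nhds V τ 0, ∃ i0, ∀ j ≥ i0, ∀ k ≥ i0, x j - x k ∈ U) →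
      ∃ a ∈ A, Filter.Tendsto x Filter.atTop (@nhds V τ a)

/-- `τ` makes `V` a locally convex topological `K`-vector space: it is a vector-space
topology whose filter of neighbourhoods of zero admits a basis of lattices. -/
def IsLCTVS (τ : TopologicalSpace V) : Prop :=
  @IsTopologicalAddGroup V τ _ ∧ @ContinuousSMul K V _ _ τ ∧
    ∀ S ∈ @nhds V τ 0, ∃ Λ : Set V, IsLatticeSet K Λ ∧ Λ ∈ @nhds V τ 0 ∧ Λ ⊆ S

/-- The topological dual of `(V, τ)`: continuous `K`-linear forms, as a set of functions. -/
def dualSet (τ : TopologicalSpace V) : Set (V → K) :=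
  {l | IsLinearMap K l ∧ @Continuous V K τ _ l}

/-- Basic neighbourhoods of zero for the `c`-topology on `V → K`: uniform convergence on
compactoid `𝒪`-submodules. -/
def cTopBasic (τ : TopologicalSpace V) : Set (Set (V → K)) :=
  {S | ∃ (B : Set V) (ε : ℝ), IsOSubmodule K B ∧ IsCompactoid K τ B ∧ 0 < ε ∧
    S = {l : V → K | ∀ x ∈ B, ‖l x‖ ≤ ε}}

/-- The `c`-topology (uniform convergence on compactoid `𝒪`-submodules) on `V → K`. -/
def cTop (τ : TopologicalSpace V) : TopologicalSpace (V → K) :=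
  addTopologyOf (cTopBasic K τ)

/-- The pseudo-polar `A^p = {l ∈ V' : |l(v)| < 1 for all v ∈ A}`. -/
def pseudoPolar (τ : TopologicalSpace V) (A : Set V) : Set (V → K) :=
  {l | l ∈ dualSet K τ ∧ ∀ v ∈ A, ‖l v‖ < 1}

/-- The pseudo-bipolar `A^{pp} = {v ∈ V : |l(v)| < 1 for all l ∈ A^p}`. -/
def pseudoBipolar (τ : TopologicalSpace V) (A : Set V) : Set V :=
  {v | ∀ l ∈ pseudoPolar K τ A, ‖l v‖ < 1}

end LCS

/-! ### The equal characteristic field `K((t))` -/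

/-- Basic neighbourhoods of zero for the higher topology on `K((t))`:
`Σ U_i t^i` where each `U_i` is an open neighbourhood of `0` in `K` and `U_i = K` for all
sufficiently large `i`. -/
def laurentBasic : Set (Set (LaurentSeries K)) :=
  {S | ∃ U : ℤ → Set K, (∀ i, IsOpen (U i) ∧ (0 : K) ∈ U i) ∧
    (∃ N : ℤ, ∀ i, N ≤ i → U i = Set.univ) ∧
    S = {f : LaurentSeries K | ∀ i, f.coeff i ∈ U i}}

/-- The higher topology on `K((t))`. -/
def laurentTop : TopologicalSpace (LaurentSeries K) := addTopologyOf (laurentBasic K)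

/-- `Λ = Σ_{i∈ℤ} 𝔭^{n_i} t^i ⊆ K((t))` for a sequence `(n_i) ⊆ ℤ ∪ {-∞}`. -/
def laurentLambda (q : ℕ) (n : ℤ → WithBot ℤ) : Set (LaurentSeries K) :=
  {f | ∀ i, f.coeff i ∈ pB K q (n i)}

/-- `B = Σ_{i∈ℤ} 𝔭^{k_i} t^i ⊆ K((t))` for a sequence `(k_i) ⊆ ℤ ∪ {∞}`. -/
def laurentPT (q : ℕ) (k : ℤ → WithTop ℤ) : Set (LaurentSeries K) :=
  {f | ∀ i, f.coeff i ∈ pT K q (k i)}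

/-- `A = Σ_{i∈ℤ} 𝔭^{k_i} t^i ⊆ K((t))` for a sequence `(k_i) ⊆ ℤ ∪ {±∞}`. -/
def laurentPE (q : ℕ) (k : ℤ → WithBot (WithTop ℤ)) : Set (LaurentSeries K) :=
  {f | ∀ i, f.coeff i ∈ pE K q (k i)}

/-- The admissible seminorm `‖Σ x_i t^i‖ = max_i ‖x_i‖ q^{n_i}` on `K((t))`. -/
def laurentSeminorm (q : ℕ) (n : ℤ → WithBot ℤ) (f : LaurentSeries K) : ℝ :=
  sSup {r : ℝ | ∃ i : ℤ, r = ‖f.coeff i‖ * qpow q (n i)}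

/-- The ring of integers `K[[t]] ⊆ K((t))`. -/
def laurentIntegers : Set (LaurentSeries K) := {f | ∀ i, i < 0 → f.coeff i = 0}

/-- The rank-two ring of integers `𝒪 + tK[[t]] ⊆ K((t))`. -/
def laurentRankTwo : Set (LaurentSeries K) :=
  {f | (∀ i, i < 0 → f.coeff i = 0) ∧ ‖f.coeff 0‖ ≤ 1}

/-- The pairing `γ(x)(y) = π₀(xy) = Σ_i x_i y_{-i}` on `K((t))`. -/
def laurentPairing (x y : LaurentSeries K) : K := ∑' i : ℤ, x.coeff i * y.coeff (-i)

/-! ### The mixed characteristic field `K{{t}}` -/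

/-- The underlying `K`-vector space of `K{{t}}`: functions `x : ℤ → K` (coefficients of
`Σ x_i t^i`) with `inf_i v_K(x_i) > -∞` (i.e. bounded norms) and `x_i → 0` as `i → -∞`. -/
def mixedCarrier : Submodule K (ℤ → K) where
  carrier := {x | (∃ C : ℝ, ∀ i, ‖x i‖ ≤ C) ∧ Filter.Tendsto x Filter.atBot (nhds (0 : K))}
  zero_mem' := ⟨⟨0, fun i => by simp⟩, tendsto_const_nhds⟩
  add_mem' := by
    rintro x y ⟨⟨C, hC⟩, hx⟩ ⟨⟨D, hD⟩, hy⟩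
    refine ⟨⟨C + D, fun i => (norm_add_le _ _).trans (add_le_add (hC i) (hD i))⟩, ?_⟩
    have h : Filter.Tendsto (x + y) Filter.atBot (nhds ((0 : K) + 0)) := hx.add hy
    rwa [add_zero] at h
  smul_mem' := by
    rintro c x ⟨⟨C, hC⟩, hx⟩
    refine ⟨⟨‖c‖ * C, fun i => ?_⟩, ?_⟩
    · have h : ‖(c • x) i‖ = ‖c‖ * ‖x i‖ := by simp [norm_smul]
      rw [h]
      exact mul_le_mul_of_nonneg_left (hC i) (norm_nonneg c)
    · have h : Filter.Tendsto (c • x) Filter.atBot (nhds (c • (0 : K))) := hx.const_smul c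
      rwa [smul_zero] at h

/-- The field `K{{t}}`, as a `K`-vector space. -/
abbrev Mt := ↥(mixedCarrier K)

/-- Basic neighbourhoods of zero for the higher topology on `K{{t}}`:
`Σ V_i t^i` where each `V_i` is an open neighbourhood of `0` in `K`, some `𝔭^c` is
contained in every `V_i`, and for every `l` eventually `𝔭^l ⊆ V_i`. -/
def mixedBasic (q : ℕ) : Set (Set (Mt K)) :=
  {S | ∃ Vs : ℤ → Set K, (∀ i, IsOpen (Vs i) ∧ (0 : K) ∈ Vs i) ∧
    (∃ c : ℤ, ∀ i, {x : K | ‖x‖ ≤ (q : ℝ) ^ (-c)} ⊆ Vs i) ∧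
    (∀ l : ℤ, ∃ i0 : ℤ, ∀ i, i0 ≤ i → {x : K | ‖x‖ ≤ (q : ℝ) ^ (-l)} ⊆ Vs i) ∧
    S = {f : Mt K | ∀ i, f.1 i ∈ Vs i}}

/-- The higher topology on `K{{t}}`. -/
def mixedTop (q : ℕ) : TopologicalSpace (Mt K) := addTopologyOf (mixedBasic K q)

/-- `Λ = Σ_{i∈ℤ} 𝔭^{n_i} t^i ⊆ K{{t}}` for a sequence `(n_i) ⊆ ℤ ∪ {-∞}`. -/
def mixedLambda (q : ℕ) (n : ℤ → WithBot ℤ) : Set (Mt K) :=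
  {f | ∀ i, f.1 i ∈ pB K q (n i)}

/-- `B = Σ_{i∈ℤ} 𝔭^{k_i} t^i ⊆ K{{t}}` for a sequence `(k_i) ⊆ ℤ ∪ {∞}`. -/
def mixedPT (q : ℕ) (k : ℤ → WithTop ℤ) : Set (Mt K) :=
  {f | ∀ i, f.1 i ∈ pT K q (k i)}

/-- `A = Σ_{i∈ℤ} 𝔭^{k_i} t^i ⊆ K{{t}}` for a sequence `(k_i) ⊆ ℤ ∪ {±∞}`. -/
def mixedPE (q : ℕ) (k : ℤ → WithBot (WithTop ℤ)) : Set (Mt K) :=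
  {f | ∀ i, f.1 i ∈ pE K q (k i)}

/-- The admissible seminorm `‖Σ x_i t^i‖ = sup_i ‖x_i‖ q^{n_i}` on `K{{t}}`. -/
def mixedSeminorm (q : ℕ) (n : ℤ → WithBot ℤ) (f : Mt K) : ℝ :=
  sSup {r : ℝ | ∃ i : ℤ, r = ‖f.1 i‖ * qpow q (n i)}

/-- The ring of integers `𝒪{{t}} ⊆ K{{t}}`. -/
def mixedIntegers : Set (Mt K) := {f | ∀ i, ‖f.1 i‖ ≤ 1}

/-- The rank-two ring of integers `Σ_{i<0} 𝔭 t^i + Σ_{i≥0} 𝒪 t^i ⊆ K{{t}}`. -/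
def mixedRankTwo (q : ℕ) : Set (Mt K) :=
  {f | (∀ i : ℤ, i < 0 → ‖f.1 i‖ ≤ ((q : ℝ))⁻¹) ∧ ∀ i : ℤ, 0 ≤ i → ‖f.1 i‖ ≤ 1}

/-- The monomial `t^i ∈ K{{t}}`. -/
def mixedT (i : ℤ) : Mt K :=
  ⟨fun j => if j = i then 1 else 0,
    ⟨⟨1, fun j => by by_cases h : j = i <;> simp [h]⟩, by
      refine (tendsto_const_nhds : Filter.Tendsto (fun _ : ℤ => (0 : K))
        Filter.atBot (nhds 0)).congr' ?_
      filter_upwards [Filter.eventually_le_atBot (i - 1)] with j hj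
      have h : j ≠ i := by omega
      simp [h]⟩⟩

/-- Coefficients of the product of two elements of `K{{t}}` (Cauchy product). -/
def mixedMulCoeff (x y : Mt K) : ℤ → K := fun k => ∑' i : ℤ, x.1 i * y.1 (k - i)

/-- Multiplication on `K{{t}}`. -/
def mixedMul (x y : Mt K) : Mt K :=
  if h : mixedMulCoeff K x y ∈ mixedCarrier K then ⟨_, h⟩ else 0

/-- The pairing `γ(x)(y) = π₀(xy) = Σ_i x_i y_{-i}` on `K{{t}}`. -/
def mixedPairing (x y : Mt K) : K := ∑' i : ℤ, x.1 i * y.1 (-i)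


/-! ### Auxiliary lemmas for Statement 1 -/

section Aux

variable {q : ℕ}

lemma qpow_bot (q : ℕ) : qpow q (⊥ : WithBot ℤ) = 0 := rfl

lemma qpow_coe (q : ℕ) (m : ℤ) : qpow q (m : WithBot ℤ) = (q : ℝ) ^ m := rfl

lemma botOrCoe (v : WithBot ℤ) : v = ⊥ ∨ ∃ m : ℤ, v = (m : WithBot ℤ) := by
  induction v using WithBot.recBotCoe with
  | bot => exact Or.inl rfl
  | coe m => exact Or.inr ⟨m, rfl⟩

lemma qpow_nonneg' (q : ℕ) (n : WithBot ℤ) : 0 ≤ qpow q n := by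
  induction n using WithBot.recBotCoe with
  | bot => simp [qpow_bot]
  | coe m => exact zpow_nonneg (by positivity) m

lemma pB_bot (q : ℕ) : pB K q (⊥ : WithBot ℤ) = Set.univ := rfl

lemma pB_coe (q : ℕ) (m : ℤ) : pB K q (m : WithBot ℤ) = {x : K | ‖x‖ ≤ (q : ℝ) ^ (-m)} := rfl

lemma zero_mem_pB (q : ℕ) (n : WithBot ℤ) : (0 : K) ∈ pB K q n := by
  induction n using WithBot.recBotCoe with
  | bot => trivial
  | coe m => show ‖(0 : K)‖ ≤ (q : ℝ) ^ (-m); rw [norm_zero]; positivity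

variable {K}

lemma pB_add_mem (hK : IsCharZeroLocalField K q) {n : WithBot ℤ} {x y : K}
    (hx : x ∈ pB K q n) (hy : y ∈ pB K q n) : x + y ∈ pB K q n := by
  induction n using WithBot.recBotCoe with
  | bot => trivial
  | coe m =>
    show ‖x + y‖ ≤ (q : ℝ) ^ (-m)
    exact le_trans (hK.nonarch x y) (max_le hx hy)

lemma hq1R (hK : IsCharZeroLocalField K q) : (1 : ℝ) < q := by exact_mod_cast hK.one_lt_q

lemma hq0R (hK : IsCharZeroLocalField K q) : (0 : ℝ) < q := lt_trans one_pos (hq1R hK)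

/-- The closed ball of radius `q^{-m}` is open in `K`. -/
lemma ball_isOpen (hK : IsCharZeroLocalField K q) (m : ℤ) :
    IsOpen {x : K | ‖x‖ ≤ (q : ℝ) ^ (-m)} := by
  have hq1 := hq1R hK
  have h : {x : K | ‖x‖ ≤ (q : ℝ) ^ (-m)} = {x : K | ‖x‖ < (q : ℝ) ^ (-m + 1)} := by
    ext x
    constructor
    · intro hx
      exact lt_of_le_of_lt hx (zpow_lt_zpow_right₀ hq1 (by omega))
    · intro hx
      rcases eq_or_ne x 0 with rfl | hx0
      · show ‖(0 : K)‖ ≤ (q : ℝ) ^ (-m); rw [norm_zero]; positivity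
      · obtain ⟨s, hs⟩ := hK.norm_values x hx0
        simp only [Set.mem_setOf_eq] at hx ⊢
        rw [hs] at hx ⊢
        have hlt : -s < -m + 1 := (zpow_lt_zpow_iff_right₀ hq1).1 hx
        exact zpow_le_zpow_right₀ hq1.le (by omega)
  rw [h]
  exact isOpen_lt continuous_norm continuous_const

lemma pB_isOpen (hK : IsCharZeroLocalField K q) (n : WithBot ℤ) : IsOpen (pB K q n) := by
  induction n using WithBot.recBotCoe with
  | bot => exact isOpen_univ
  | coe m => exact ball_isOpen hK m

/-- There exist elements of `K` of any norm `q^{-e}`. -/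
lemma exists_norm_eq (hK : IsCharZeroLocalField K q) (e : ℤ) :
    ∃ a : K, a ≠ 0 ∧ ‖a‖ = (q : ℝ) ^ (-e) := by
  obtain ⟨π, hπ⟩ := hK.exists_uniformizer
  have hq0 := hq0R hK
  have hπ0 : π ≠ 0 := by
    intro h
    rw [h, norm_zero] at hπ
    exact (inv_pos.2 hq0).ne' hπ.symm
  refine ⟨π ^ e, zpow_ne_zero e hπ0, ?_⟩
  rw [norm_zpow, hπ, inv_zpow, ← zpow_neg]

section Seminorm

variable (n : ℤ → WithBot ℤ) (k : ℤ)

/-- The range of the term function `i ↦ ‖f.coeff i‖ * q^{n_i}` is finite. -/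
lemma term_range_finite (hk : ∀ i : ℤ, k < i → n i = ⊥) (f : LaurentSeries K) :
    (Set.range fun i : ℤ => ‖f.coeff i‖ * qpow q (n i)).Finite := by
  set g : ℤ → ℝ := fun i => ‖f.coeff i‖ * qpow q (n i) with hg
  have hsub : {i : ℤ | g i ≠ 0} ⊆ f.support ∩ Set.Iic k := by
    intro i hi
    refine ⟨fun h0 => hi ?_, ?_⟩
    · simp only [hg, Function.mem_support, ne_eq, not_not] at h0 ⊢
      rw [h0, norm_zero, zero_mul]
    · by_contra h
      exact hi (by simp only [hg]; rw [hk i (Set.notMem_Iic.mp (by simpa using h)), qpow_bot,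
        mul_zero])
  have hfin : (f.support ∩ Set.Iic k).Finite := by
    by_cases hne : (f.support ∩ Set.Iic k).Nonempty
    · have hwf : (f.support ∩ Set.Iic k).IsWF :=
        f.isWF_support.mono Set.inter_subset_left
      refine (Set.finite_Icc (hwf.min hne) k).subset fun i hi => ?_
      exact ⟨hwf.min_le hne hi, hi.2⟩
    · rw [Set.not_nonempty_iff_eq_empty] at hne
      rw [hne]
      exact Set.finite_empty
  refine ((hfin.image g).insert 0).subset ?_
  rintro r ⟨i, rfl⟩
  by_cases h : g i = 0
  · exact Or.inl h
  · exact Or.inr ⟨i, hsub h, rfl⟩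

lemma laurentSeminorm_set_eq (f : LaurentSeries K) :
    {r : ℝ | ∃ i : ℤ, r = ‖f.coeff i‖ * qpow q (n i)} =
      Set.range fun i : ℤ => ‖f.coeff i‖ * qpow q (n i) :=
  Set.ext fun r => ⟨fun ⟨i, h⟩ => ⟨i, h.symm⟩, fun ⟨i, h⟩ => ⟨i, h.symm⟩⟩

variable {n k}

lemma le_laurentSeminorm (hk : ∀ i : ℤ, k < i → n i = ⊥) (f : LaurentSeries K) (i : ℤ) :
    ‖f.coeff i‖ * qpow q (n i) ≤ laurentSeminorm K q n f := by
  rw [laurentSeminorm, laurentSeminorm_set_eq]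
  exact le_csSup (term_range_finite n k hk f).bddAbove ⟨i, rfl⟩

lemma laurentSeminorm_exists_eq (hk : ∀ i : ℤ, k < i → n i = ⊥) (f : LaurentSeries K) :
    ∃ i0 : ℤ, laurentSeminorm K q n f = ‖f.coeff i0‖ * qpow q (n i0) := by
  have hmem := (Set.range_nonempty (fun i : ℤ => ‖f.coeff i‖ * qpow q (n i))).csSup_mem
    (term_range_finite n k hk f)
  obtain ⟨i0, h⟩ := hmem
  exact ⟨i0, by rw [laurentSeminorm, laurentSeminorm_set_eq]; exact h.symm⟩

lemma laurentSeminorm_le {f : LaurentSeries K} {c : ℝ}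
    (hc : ∀ i : ℤ, ‖f.coeff i‖ * qpow q (n i) ≤ c) : laurentSeminorm K q n f ≤ c := by
  rw [laurentSeminorm]
  exact csSup_le ⟨_, ⟨0, rfl⟩⟩ (by rintro r ⟨i, rfl⟩; exact hc i)

lemma laurentSeminorm_nonneg (hk : ∀ i : ℤ, k < i → n i = ⊥) (f : LaurentSeries K) :
    0 ≤ laurentSeminorm K q n f := by
  have h := le_laurentSeminorm (q := q) hk f (k + 1)
  rwa [hk _ (lt_add_one k), qpow_bot, mul_zero] at h

lemma mem_laurentLambda_iff (hK : IsCharZeroLocalField K q) (f : LaurentSeries K) :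
    f ∈ laurentLambda K q n ↔ ∀ i : ℤ, ‖f.coeff i‖ * qpow q (n i) ≤ 1 := by
  have hq0 := hq0R hK
  refine forall_congr' fun i => ?_
  rcases botOrCoe (n i) with hni | ⟨m, hni⟩
  · rw [hni]
    simp [pB_bot, qpow_bot]
  · rw [hni, pB_coe, qpow_coe]
    have hpos : (0 : ℝ) < (q : ℝ) ^ m := by positivity
    constructor
    · intro h
      calc ‖f.coeff i‖ * (q : ℝ) ^ m ≤ (q : ℝ) ^ (-m) * (q : ℝ) ^ m := by
            exact mul_le_mul_of_nonneg_right h hpos.le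
        _ = 1 := by rw [← zpow_add₀ hq0.ne', neg_add_cancel, zpow_zero]
    · intro h
      have h2 : ‖f.coeff i‖ * (q : ℝ) ^ m * ((q : ℝ) ^ m)⁻¹ ≤ 1 * ((q : ℝ) ^ m)⁻¹ :=
        mul_le_mul_of_nonneg_right h (inv_nonneg.2 hpos.le)
      rw [mul_assoc, mul_inv_cancel₀ hpos.ne', mul_one, one_mul] at h2
      rw [zpow_neg]
      exact h2

lemma mem_smul_laurentLambda_iff (hK : IsCharZeroLocalField K q)
    (hk : ∀ i : ℤ, k < i → n i = ⊥) (f : LaurentSeries K) {a : K} (ha : a ≠ 0) :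
    f ∈ a • laurentLambda K q n ↔ laurentSeminorm K q n f ≤ ‖a‖ := by
  rw [Set.mem_smul_set_iff_inv_smul_mem₀ ha, mem_laurentLambda_iff hK]
  have hapos : (0 : ℝ) < ‖a‖ := norm_pos_iff.2 ha
  have hco : ∀ i : ℤ, ‖(a⁻¹ • f).coeff i‖ = ‖a‖⁻¹ * ‖f.coeff i‖ := by
    intro i
    rw [HahnSeries.coeff_smul, smul_eq_mul, norm_mul, norm_inv]
  constructor
  · intro h
    refine laurentSeminorm_le fun i => ?_
    have hi := h i
    rw [hco i, mul_assoc] at hi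
    calc ‖f.coeff i‖ * qpow q (n i)
        = ‖a‖ * (‖a‖⁻¹ * (‖f.coeff i‖ * qpow q (n i))) := by
          rw [← mul_assoc, mul_inv_cancel₀ hapos.ne', one_mul]
      _ ≤ ‖a‖ * 1 := mul_le_mul_of_nonneg_left hi hapos.le
      _ = ‖a‖ := mul_one _
  · intro h i
    rw [hco i, mul_assoc]
    have hti : ‖f.coeff i‖ * qpow q (n i) ≤ ‖a‖ := le_trans (le_laurentSeminorm hk f i) h
    calc ‖a‖⁻¹ * (‖f.coeff i‖ * qpow q (n i)) ≤ ‖a‖⁻¹ * ‖a‖ :=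
          mul_le_mul_of_nonneg_left hti (inv_nonneg.2 hapos.le)
      _ = 1 := inv_mul_cancel₀ hapos.ne'

lemma laurentSeminorm_zero (hk : ∀ i : ℤ, k < i → n i = ⊥) :
    laurentSeminorm K q n (0 : LaurentSeries K) = 0 := by
  refine le_antisymm (laurentSeminorm_le fun i => ?_) (laurentSeminorm_nonneg hk 0)
  rw [HahnSeries.coeff_zero, norm_zero, zero_mul]

/-- The seminorm equals the gauge seminorm of the associated lattice. -/
lemma laurentSeminorm_eq_gauge (hK : IsCharZeroLocalField K q)
    (hk : ∀ i : ℤ, k < i → n i = ⊥) (f : LaurentSeries K) :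
    laurentSeminorm K q n f = gaugeSeminorm K (laurentLambda K q n) f := by
  have hq0 := hq0R hK
  have hq1 := hq1R hK
  rw [gaugeSeminorm]
  have hG : {r : ℝ | ∃ a : K, f ∈ a • laurentLambda K q n ∧ r = ‖a‖} =
      {r : ℝ | ∃ a : K, f ∈ a • laurentLambda K q n ∧ r = ‖a‖} := rfl
  set G := {r : ℝ | ∃ a : K, f ∈ a • laurentLambda K q n ∧ r = ‖a‖} with hGdef
  have hGbdd : BddBelow G := ⟨0, by rintro r ⟨a, _, rfl⟩; exact norm_nonneg a⟩
  have hlb : ∀ r ∈ G, laurentSeminorm K q n f ≤ r := by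
    rintro r ⟨a, hfa, rfl⟩
    rcases eq_or_ne a 0 with rfl | ha
    · have hne : (laurentLambda K q n).Nonempty := ⟨0, fun i => by
        rw [HahnSeries.coeff_zero]; exact zero_mem_pB K q (n i)⟩
      rw [zero_smul_set hne] at hfa
      have hf0 : f = 0 := Set.mem_zero.1 hfa
      rw [hf0, laurentSeminorm_zero hk, norm_zero]
    · exact (mem_smul_laurentLambda_iff hK hk f ha).1 hfa
  have hmemG : ∀ e : ℤ, laurentSeminorm K q n f ≤ (q : ℝ) ^ (-e) →
      (q : ℝ) ^ (-e) ∈ G := by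
    intro e he
    obtain ⟨a, ha0, hna⟩ := exists_norm_eq hK e
    exact ⟨a, (mem_smul_laurentLambda_iff hK hk f ha0).2 (by rw [hna]; exact he), hna.symm⟩
  rcases (laurentSeminorm_nonneg (q := q) hk f).eq_or_lt with h0 | hpos
  · -- seminorm is 0
    refine le_antisymm (le_csInf ⟨_, hmemG 0 (by rw [← h0]; positivity)⟩ hlb) ?_
    rw [← h0]
    by_contra hlt
    push_neg at hlt
    obtain ⟨e, he⟩ := exists_pow_lt_of_lt_one hlt (inv_lt_one_of_one_lt₀ hq1)
    have h1 : sInf G ≤ (q : ℝ) ^ (-(e : ℤ)) :=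
      csInf_le hGbdd (hmemG e (by rw [← h0]; positivity))
    rw [zpow_neg, zpow_natCast, ← inv_pow] at h1
    exact absurd (lt_of_le_of_lt h1 he) (lt_irrefl _)
  · -- seminorm is positive
    obtain ⟨i0, hi0⟩ := laurentSeminorm_exists_eq (q := q) hk f
    have hc0 : f.coeff i0 ≠ 0 := by
      intro h
      rw [h, norm_zero, zero_mul] at hi0
      exact hpos.ne' hi0
    obtain ⟨m, hm⟩ : ∃ m : ℤ, n i0 = (m : WithBot ℤ) := by
      rcases botOrCoe (n i0) with hni | h
      · rw [hni, qpow_bot, mul_zero] at hi0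
        exact absurd hi0 hpos.ne'
      · exact h
    obtain ⟨s, hs⟩ := hK.norm_values _ hc0
    have hNval : laurentSeminorm K q n f = (q : ℝ) ^ (-(s - m)) := by
      rw [hi0, hs, hm, qpow_coe, ← zpow_add₀ hq0.ne']
      congr 1
      ring
    refine le_antisymm (le_csInf ⟨_, hmemG (s - m) hNval.le⟩ hlb) ?_
    have h2 := csInf_le hGbdd (hmemG (s - m) hNval.le)
    rwa [← hNval] at h2

end Seminorm

section Top

lemma laurentLambda_mem_basic (hK : IsCharZeroLocalField K q) (n : ℤ → WithBot ℤ) (k : ℤ)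
    (hk : ∀ i : ℤ, k < i → n i = ⊥) : laurentLambda K q n ∈ laurentBasic K := by
  refine ⟨fun i => pB K q (n i), fun i => ⟨pB_isOpen hK (n i), zero_mem_pB K q (n i)⟩,
    ⟨k + 1, fun i hi => ?_⟩, rfl⟩
  show pB K q (n i) = Set.univ
  rw [hk i (by omega)]
  rfl

lemma univ_mem_laurentBasic : Set.univ ∈ laurentBasic K := by
  refine ⟨fun _ => Set.univ, fun i => ⟨isOpen_univ, trivial⟩, ⟨0, fun _ _ => rfl⟩, ?_⟩
  ext f
  simp

lemma inter_mem_laurentBasic {U V : Set (LaurentSeries K)} (hU : U ∈ laurentBasic K)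
    (hV : V ∈ laurentBasic K) : U ∩ V ∈ laurentBasic K := by
  obtain ⟨Us, hUo, ⟨N1, hN1⟩, rfl⟩ := hU
  obtain ⟨Vs, hVo, ⟨N2, hN2⟩, rfl⟩ := hV
  refine ⟨fun i => Us i ∩ Vs i,
    fun i => ⟨(hUo i).1.inter (hVo i).1, ⟨(hUo i).2, (hVo i).2⟩⟩,
    ⟨max N1 N2, fun i hi => ?_⟩, ?_⟩
  · show Us i ∩ Vs i = Set.univ
    rw [hN1 i (le_trans (le_max_left _ _) hi), hN2 i (le_trans (le_max_right _ _) hi),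
      Set.univ_inter]
  · ext f
    simp only [Set.mem_inter_iff, Set.mem_setOf_eq, ← forall_and]

/-- Every basic open set contains a lattice of the standard shape. -/
lemma exists_lambda_subset (hK : IsCharZeroLocalField K q) {U : Set (LaurentSeries K)}
    (hU : U ∈ laurentBasic K) :
    ∃ (n : ℤ → WithBot ℤ) (k : ℤ), (∀ i : ℤ, k < i → n i = ⊥) ∧ laurentLambda K q n ⊆ U := by
  have hq1 := hq1R hK
  obtain ⟨Us, hopen, ⟨N, hN⟩, rfl⟩ := hU
  have hstep : ∀ i : ℤ, ∃ v : WithBot ℤ, pB K q v ⊆ Us i ∧ (N ≤ i → v = ⊥) := by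
    intro i
    by_cases hi : N ≤ i
    · exact ⟨⊥, by rw [hN i hi, pB_bot], fun _ => rfl⟩
    · obtain ⟨δ, hδ, hball⟩ := Metric.isOpen_iff.1 (hopen i).1 0 (hopen i).2
      obtain ⟨m, hm⟩ := exists_pow_lt_of_lt_one hδ (inv_lt_one_of_one_lt₀ hq1)
      refine ⟨((m : ℤ) : WithBot ℤ), ?_, fun h => absurd h hi⟩
      intro x hx
      apply hball
      rw [Metric.mem_ball, dist_zero_right]
      calc ‖x‖ ≤ (q : ℝ) ^ (-(m : ℤ)) := hx
        _ = ((q : ℝ)⁻¹) ^ m := by rw [zpow_neg, zpow_natCast, inv_pow]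
        _ < δ := hm
  choose v hv hbot using hstep
  exact ⟨v, N - 1, fun i hi => hbot i (by omega), fun f hf i => hv i (hf i)⟩

/-- The defining filter of the higher topology. -/
lemma mem_laurentFilter_iff (t : Set (LaurentSeries K)) :
    t ∈ (⨅ U ∈ laurentBasic K, Filter.principal U) ↔ ∃ U ∈ laurentBasic K, U ⊆ t := by
  rw [Filter.mem_biInf_of_directed ?_ ⟨_, univ_mem_laurentBasic (K := K)⟩]
  · simp only [Filter.mem_principal]
  · rintro U hU V hV
    exact ⟨U ∩ V, inter_mem_laurentBasic hU hV,
      Filter.principal_mono.2 Set.inter_subset_left,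
      Filter.principal_mono.2 Set.inter_subset_right⟩

lemma laurentLambda_add_mem (hK : IsCharZeroLocalField K q) {n : ℤ → WithBot ℤ}
    {f g : LaurentSeries K} (hf : f ∈ laurentLambda K q n) (hg : g ∈ laurentLambda K q n) :
    f + g ∈ laurentLambda K q n := by
  intro i
  rw [HahnSeries.coeff_add]
  exact pB_add_mem hK (hf i) (hg i)

lemma zero_mem_basic {U : Set (LaurentSeries K)} (hU : U ∈ laurentBasic K) :
    (0 : LaurentSeries K) ∈ U := by
  obtain ⟨Us, hopen, _, rfl⟩ := hU
  intro i
  rw [HahnSeries.coeff_zero]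
  exact (hopen i).2

/-- Computation of neighbourhood filters for the higher topology. -/
lemma nhds_laurentTop (hK : IsCharZeroLocalField K q) (x : LaurentSeries K) :
    @nhds _ (laurentTop K) x =
      Filter.map (fun v => x + v) (⨅ U ∈ laurentBasic K, Filter.principal U) := by
  refine TopologicalSpace.nhds_mkOfNhds _ _ ?_ ?_
  · intro y s hs
    rw [Filter.mem_map, mem_laurentFilter_iff] at hs
    obtain ⟨U, hU, hUs⟩ := hs
    have : y + 0 ∈ s := hUs (zero_mem_basic hU)
    rwa [add_zero] at this
  · intro y s hs
    rw [Filter.mem_map, mem_laurentFilter_iff] at hs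
    obtain ⟨U, hU, hUs⟩ := hs
    obtain ⟨n, k, hk, hΛU⟩ := exists_lambda_subset hK hU
    rw [Filter.eventually_iff, Filter.mem_map]
    rw [mem_laurentFilter_iff]
    refine ⟨laurentLambda K q n, laurentLambda_mem_basic hK n k hk, ?_⟩
    intro l hl
    show s ∈ Filter.map _ _
    rw [Filter.mem_map, mem_laurentFilter_iff]
    refine ⟨laurentLambda K q n, laurentLambda_mem_basic hK n k hk, ?_⟩
    intro m hm
    have : l + m ∈ laurentLambda K q n := laurentLambda_add_mem hK hl hm
    have h2 : (y + l) + m = y + (l + m) := by ring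
    show (y + l) + m ∈ s
    rw [h2]
    exact hUs (hΛU this)

lemma nhds_zero_laurentTop (hK : IsCharZeroLocalField K q) (S : Set (LaurentSeries K)) :
    S ∈ @nhds _ (laurentTop K) 0 ↔ ∃ U ∈ laurentBasic K, U ⊆ S := by
  rw [nhds_laurentTop hK, Filter.mem_map, ← mem_laurentFilter_iff]
  have : (fun v : LaurentSeries K => 0 + v) ⁻¹' S = S := by
    ext f; simp
  rw [this]

end Top

end Aux

/-- For any sequence `(n_i) ⊆ ℤ ∪ {-∞}` with `n_i = -∞` for all `i > k`,
the map `‖Σ x_i t^i‖ = max_{i≤k} ‖x_i‖ q^{n_i}` is a seminorm on `K((t))`, equal to the gauge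
seminorm of the lattice `Σ 𝔭^{n_i} t^i`; and the higher topology is exactly the locally convex
topology defined by the family of all such seminorms. -/
theorem statement1 (q : ℕ) (hK : IsCharZeroLocalField K q) :
    (∀ n : ℤ → WithBot ℤ, (∃ k : ℤ, ∀ i : ℤ, k < i → n i = ⊥) →
      IsSeminorm K (laurentSeminorm K q n) ∧
      ∀ f : LaurentSeries K,
        laurentSeminorm K q n f = gaugeSeminorm K (laurentLambda K q n) f) ∧
    (∀ S : Set (LaurentSeries K),
      S ∈ @nhds _ (laurentTop K) 0 ↔
        ∃ (m : ℕ) (ns : Fin m → ℤ → WithBot ℤ) (ε : ℝ), 0 < ε ∧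
          (∀ j, ∃ k : ℤ, ∀ i : ℤ, k < i → ns j i = ⊥) ∧
          {f : LaurentSeries K | ∀ j, laurentSeminorm K q (ns j) f ≤ ε} ⊆ S) := by
  have hq1 := hq1R hK
  have hq0 := hq0R hK
  constructor
  · -- seminorm and gauge
    rintro n ⟨k, hk⟩
    refine ⟨⟨?_, ?_⟩, fun f => laurentSeminorm_eq_gauge hK hk f⟩
    · -- smul
      intro c f
      have hco : ∀ i : ℤ, ‖(c • f).coeff i‖ * qpow q (n i) =
          ‖c‖ * (‖f.coeff i‖ * qpow q (n i)) := by
        intro i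
        rw [HahnSeries.coeff_smul, smul_eq_mul, norm_mul, mul_assoc]
      refine le_antisymm (laurentSeminorm_le fun i => ?_) ?_
      · rw [hco i]
        exact mul_le_mul_of_nonneg_left (le_laurentSeminorm hk f i) (norm_nonneg c)
      · obtain ⟨i0, h0⟩ := laurentSeminorm_exists_eq hk f
        calc ‖c‖ * laurentSeminorm K q n f = ‖(c • f).coeff i0‖ * qpow q (n i0) := by
              rw [h0, hco i0]
          _ ≤ laurentSeminorm K q n (c • f) := le_laurentSeminorm hk (c • f) i0
    · -- additivity
      intro f g
      refine laurentSeminorm_le fun i => ?_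
      have hn : ‖(f + g).coeff i‖ ≤ max ‖f.coeff i‖ ‖g.coeff i‖ := by
        rw [HahnSeries.coeff_add]
        exact hK.nonarch _ _
      calc ‖(f + g).coeff i‖ * qpow q (n i)
          ≤ max ‖f.coeff i‖ ‖g.coeff i‖ * qpow q (n i) :=
            mul_le_mul_of_nonneg_right hn (qpow_nonneg' q (n i))
        _ = max (‖f.coeff i‖ * qpow q (n i)) (‖g.coeff i‖ * qpow q (n i)) :=
            max_mul_of_nonneg _ _ (qpow_nonneg' q (n i))
        _ ≤ max (laurentSeminorm K q n f) (laurentSeminorm K q n g) :=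
            max_le_max (le_laurentSeminorm hk f i) (le_laurentSeminorm hk g i)
  · -- topology
    intro S
    rw [nhds_zero_laurentTop hK]
    constructor
    · rintro ⟨U, hU, hUS⟩
      obtain ⟨n, k, hk, hΛU⟩ := exists_lambda_subset hK hU
      refine ⟨1, fun _ => n, 1, one_pos, fun _ => ⟨k, hk⟩, ?_⟩
      intro f hf
      apply hUS
      apply hΛU
      rw [mem_laurentLambda_iff hK]
      intro i
      exact le_trans (le_laurentSeminorm hk f i) (hf 0)
    · rintro ⟨m, ns, ε, hε, hks, hsub⟩
      choose ks hks using hks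
      -- a single exponent shift that makes every ball small enough
      obtain ⟨e, he⟩ := exists_pow_lt_of_lt_one hε (inv_lt_one_of_one_lt₀ hq1)
      have heε : (q : ℝ) ^ (-(e : ℤ)) ≤ ε := by
        rw [zpow_neg, zpow_natCast, ← inv_pow]
        exact he.le
      set Vs : ℤ → Set K := fun i => ⋂ j : Fin m, pB K q (ns j i + ((e : ℤ) : WithBot ℤ))
        with hVs
      obtain ⟨Nk, hNk⟩ := Finite.exists_le ks
      refine ⟨{f : LaurentSeries K | ∀ i, f.coeff i ∈ Vs i}, ⟨Vs, fun i =>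
        ⟨isOpen_iInter_of_finite fun j => pB_isOpen hK _,
         Set.mem_iInter.2 fun j => zero_mem_pB K q _⟩, ⟨Nk + 1, fun i hi => ?_⟩, rfl⟩, ?_⟩
      · have : ∀ j : Fin m, ns j i + ((e : ℤ) : WithBot ℤ) = ⊥ := by
          intro j
          rw [hks j i (by have := hNk j; omega), WithBot.bot_add]
        simp only [hVs, this, pB_bot, Set.iInter_univ]
      · intro f hf
        apply hsub
        intro j
        refine laurentSeminorm_le (n := ns j) fun i => ?_
        have hfi : f.coeff i ∈ pB K q (ns j i + ((e : ℤ) : WithBot ℤ)) :=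
          Set.mem_iInter.1 (hf i) j
        rcases botOrCoe (ns j i) with hni | ⟨m', hni⟩
        · rw [hni, qpow_bot, mul_zero]
          exact hε.le
        · rw [hni] at hfi
          rw [hni, qpow_coe]
          have hcast : (m' : WithBot ℤ) + ((e : ℤ) : WithBot ℤ) =
              ((m' + (e : ℤ) : ℤ) : WithBot ℤ) := by
            rw [WithBot.coe_add]
          rw [hcast, pB_coe] at hfi
          calc ‖f.coeff i‖ * (q : ℝ) ^ m'
              ≤ (q : ℝ) ^ (-(m' + (e : ℤ))) * (q : ℝ) ^ m' := by
                exact mul_le_mul_of_nonneg_right hfi (by positivity)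
            _ = (q : ℝ) ^ (-(e : ℤ)) := by
                rw [← zpow_add₀ hq0.ne']
                congr 1
                ring
            _ ≤ ε := heε

end TwoDimLF
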